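/- Let E be a Dedekind complete vector lattice, x ∈ E, P_x the band projection onto the band generated by x, and 𝕀_{P_x} the principal ideal of L_ob(E) generated by P_x. Then 𝕀_{P_x} = P_x·Z(E), where Z(E) is the ideal centre of E. -/
import Mathlib
set_option linter.unusedSectionVars false
set_option linter.unusedVariables false


variable (E : Type*) [AddCommGroup E] [ConditionallyCompleteLattice E] [Module ℝ E]
  [CovariantClass E E (· + ·) (· ≤ ·)] [PosSMulMono ℝ E]

section Aux

variable {E}

private lemma aux_abs_nonneg (a : E) : 0 ≤ |a| := abs_nonneg a

private lemma aux_abs_le {a b : E} (h1 : a ≤ b) (h2 : -a ≤ b) : |a| ≤ b := sup_le h1 h2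

private lemma aux_abs_eq_zero {a : E} (h : |a| = 0) : a = 0 := by
  have h1 : a ≤ 0 := h ▸ le_abs_self a
  have h2 : -a ≤ 0 := h ▸ neg_le_abs a
  exact le_antisymm h1 (by simpa using h2)

private lemma disj_add {a b c : E} (ha : 0 ≤ a) (hb : 0 ≤ b) (hc : 0 ≤ c)
    (h1 : a ⊓ b = 0) (h2 : a ⊓ c = 0) : a ⊓ (b + c) = 0 := by
  have key : a ⊓ (b + c) ≤ (a ⊓ b) + (a ⊓ c) := by
    rw [add_inf a c (a ⊓ b)]
    refine le_inf ?_ ?_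
    · rw [add_comm (a ⊓ b) a, add_inf a b a]
      exact le_inf (inf_le_left.trans (le_add_of_nonneg_right ha))
        (inf_le_left.trans (le_add_of_nonneg_right hb))
    · rw [add_comm (a ⊓ b) c, add_inf a b c]
      refine le_inf (inf_le_left.trans (le_add_of_nonneg_left hc)) ?_
      exact inf_le_right.trans (le_of_eq (add_comm b c))
  rw [h1, h2, add_zero] at key
  exact le_antisymm key (le_inf ha (add_nonneg hb hc))

private lemma disj_nsmul {a b : E} (ha : 0 ≤ a) (hb : 0 ≤ b) (h : a ⊓ b = 0) :
    ∀ n : ℕ, a ⊓ (n • b) = 0 := by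
  intro n
  induction n with
  | zero => rw [zero_smul]; exact inf_eq_right.mpr ha
  | succ n ih =>
      rw [succ_nsmul]
      exact disj_add ha (nsmul_nonneg hb n) hb ih h

private lemma disj_of_le {a b c : E} (ha : 0 ≤ a) (hc : 0 ≤ c) (hbc : |b| ≤ c)
    (h : a ⊓ c = 0) : a ⊓ |b| = 0 :=
  le_antisymm ((inf_le_inf_left a hbc).trans h.le) (le_inf ha (aux_abs_nonneg b))

private lemma disj_sub {u w₁ w₂ : E} (h1 : |u| ⊓ |w₁| = 0) (h2 : |u| ⊓ |w₂| = 0) :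
    |u| ⊓ |w₁ - w₂| = 0 := by
  have habs : |w₁ - w₂| ≤ |w₁| + |w₂| := by
    calc |w₁ - w₂| = |w₁ + (-w₂)| := by rw [sub_eq_add_neg]
    _ ≤ |w₁| + |(-w₂)| := abs_add_le _ _
    _ = |w₁| + |w₂| := by rw [abs_neg]
  exact disj_of_le (aux_abs_nonneg u)
    (add_nonneg (aux_abs_nonneg w₁) (aux_abs_nonneg w₂)) habs
    (disj_add (aux_abs_nonneg u) (aux_abs_nonneg w₁) (aux_abs_nonneg w₂) h1 h2)

/-- In a disjoint decomposition of a nonneg element, both parts are nonneg. -/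
private lemma nonneg_of_disj_decomp {a d : E} (h : |a| ⊓ |d| = 0) (hsum : 0 ≤ a + d) :
    0 ≤ a := by
  have had : -a ≤ d := by
    have : (0:E) ≤ d - (-a) := by rw [sub_neg_eq_add, add_comm]; exact hsum
    exact sub_nonneg.mp this
  have h1 : (-a) ⊔ 0 ≤ |a| := sup_le (neg_le_abs a) (aux_abs_nonneg a)
  have h2 : (-a) ⊔ 0 ≤ |d| := sup_le (had.trans (le_abs_self d)) (aux_abs_nonneg d)
  have hle : (-a) ⊔ 0 ≤ |a| ⊓ |d| := le_inf h1 h2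
  rw [h] at hle
  have : -a ≤ 0 := le_sup_left.trans hle
  exact neg_nonpos.mp this

end Aux

/-- The order on order bounded operators: `A ≤ B` iff `A x ≤ B x` for all `x ≥ 0`. -/
def opLE (A B : E →ₗ[ℝ] E) : Prop := ∀ x : E, 0 ≤ x → A x ≤ B x

/-- An operator is order bounded when it maps order bounded sets to order bounded sets. -/
def IsOrderBoundedOp (T : E →ₗ[ℝ] E) : Prop :=
  ∀ a b : E, ∃ c d : E, ∀ x : E, a ≤ x → x ≤ b → c ≤ T x ∧ T x ≤ d

/-- Band preserving: `T x` lies in the band generated by `x`; equivalently `T x ⊥ y`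
whenever `x ⊥ y`. -/
def IsBandPreserving (T : E →ₗ[ℝ] E) : Prop :=
  ∀ x y : E, |x| ⊓ |y| = 0 → |T x| ⊓ |y| = 0

/-- An orthomorphism is an order bounded band preserving linear operator. -/
def IsOrthomorphism (T : E →ₗ[ℝ] E) : Prop :=
  IsOrderBoundedOp E T ∧ IsBandPreserving E T

/-- Membership in the band generated by a set `S` (in an Archimedean vector lattice this is
the double disjoint complement of `S`). -/
def memBandGen (S : Set E) (w : E) : Prop :=
  ∀ u : E, (∀ s ∈ S, |u| ⊓ |s| = 0) → |u| ⊓ |w| = 0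

/-- `P` is the band projection onto the band `B`: it maps into `B` and `x - P x` is
disjoint from `B` for every `x`. -/
def IsBandProjectionOnto (B : Set E) (P : E →ₗ[ℝ] E) : Prop :=
  (∀ x : E, P x ∈ B) ∧ (∀ x : E, ∀ b ∈ B, |x - P x| ⊓ |b| = 0)

/-- Order convergence of a net: there is a downward directed set `D` with infimum `0`
such that the net is eventually dominated by every member of `D`. -/
def OrderConvNet {ι : Type*} [Preorder ι] (y : ι → E) (l : E) : Prop :=
  ∃ D : Set E, D.Nonempty ∧ DirectedOn (· ≥ ·) D ∧ IsGLB D 0 ∧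
    ∀ d ∈ D, ∃ i₀ : ι, ∀ i : ι, i₀ ≤ i → |y i - l| ≤ d

/-- Unbounded order convergence of a net. -/
def UOConvNet {ι : Type*} [Preorder ι] (y : ι → E) (l : E) : Prop :=
  ∀ u : E, 0 ≤ u → OrderConvNet E (fun i => |y i - l| ⊓ u) 0

/-- Order convergence of a net of operators, in the operator order of the order bounded
operators: there is a downward directed set `D` of operators whose infimum among the
order bounded operators is `0`, eventually dominating `|T i - L|`. -/
def OpOrderConvNet {ι : Type*} [Preorder ι] (T : ι → E →ₗ[ℝ] E) (L : E →ₗ[ℝ] E) : Prop :=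
  ∃ D : Set (E →ₗ[ℝ] E), D.Nonempty ∧
    DirectedOn (fun A B => opLE E B A) D ∧
    (∀ d ∈ D, opLE E 0 d) ∧
    (∀ C : E →ₗ[ℝ] E, IsOrderBoundedOp E C → (∀ d ∈ D, opLE E C d) → opLE E C 0) ∧
    ∀ d ∈ D, ∃ i₀ : ι, ∀ i : ι, i₀ ≤ i → opLE E (L - T i) d ∧ opLE E (T i - L) d

section BandProj

variable {E}

/-- A band projection is positive. -/
private lemma bandProj_nonneg {B : Set E} {P : E →ₗ[ℝ] E}
    (hP : IsBandProjectionOnto E B P) {y : E} (hy : 0 ≤ y) : 0 ≤ P y := by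
  have hd : |y - P y| ⊓ |P y| = 0 := hP.2 y (P y) (hP.1 y)
  have hd' : |P y| ⊓ |y - P y| = 0 := by rw [inf_comm]; exact hd
  exact nonneg_of_disj_decomp hd' (by simpa using hy)

/-- A band projection is dominated by the identity. -/
private lemma bandProj_le_id {B : Set E} {P : E →ₗ[ℝ] E}
    (hP : IsBandProjectionOnto E B P) {y : E} (hy : 0 ≤ y) : P y ≤ y := by
  have hd : |y - P y| ⊓ |P y| = 0 := hP.2 y (P y) (hP.1 y)
  have h0 : 0 ≤ y - P y := nonneg_of_disj_decomp hd (by simpa using hy)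
  exact sub_nonneg.mp h0

private lemma bandProj_mono {B : Set E} {P : E →ₗ[ℝ] E}
    (hP : IsBandProjectionOnto E B P) {y z : E} (h : y ≤ z) : P y ≤ P z := by
  have := bandProj_nonneg hP (sub_nonneg.mpr h)
  rw [map_sub] at this
  exact sub_nonneg.mp this

private lemma bandProj_abs_le {B : Set E} {P : E →ₗ[ℝ] E}
    (hP : IsBandProjectionOnto E B P) (w : E) : |P w| ≤ P |w| := by
  refine aux_abs_le (bandProj_mono hP (le_abs_self w)) ?_
  have := bandProj_mono hP (neg_le_abs w)
  rw [map_neg] at this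
  exact this

end BandProj

/-- for `x` in a Dedekind complete vector lattice `E`, with `P` the band
projection onto the principal band `B_x`, the principal ideal of the order bounded
operators generated by `P` equals `P ∘ Z(E)`, where `Z(E)` is the ideal centre. -/
theorem stmt11
    (x : E) (P : E →ₗ[ℝ] E)
    (hP : IsBandProjectionOnto E {w | memBandGen E {x} w} P) :
    {T : E →ₗ[ℝ] E | ∃ c : ℝ, 0 ≤ c ∧ ∀ z : E, |T z| ≤ c • P |z|} =
      {Q : E →ₗ[ℝ] E | ∃ T : E →ₗ[ℝ] E,
        (∃ c : ℝ, 0 ≤ c ∧ ∀ z : E, |T z| ≤ c • |z|) ∧ Q = P.comp T} := by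
  ext T
  simp only [Set.mem_setOf_eq]
  constructor
  · rintro ⟨c, hc, hT⟩
    refine ⟨T, ⟨c, hc, fun z => ?_⟩, ?_⟩
    · -- |T z| ≤ c • |z| since P |z| ≤ |z|
      exact (hT z).trans (smul_le_smul_of_nonneg_left
        (bandProj_le_id hP (aux_abs_nonneg z)) hc)
    · -- T = P ∘ T : every T z lies in the band, and P fixes the band
      ext z
      simp only [LinearMap.coe_comp, Function.comp_apply]
      -- first: T z is in the band
      have hTz : memBandGen E {x} (T z) := by
        intro u hu
        have hPz : memBandGen E {x} (P |z|) := hP.1 |z|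
        have hd : |u| ⊓ (abs (P |z|)) = 0 := hPz u hu
        have hPz0 : 0 ≤ P |z| := bandProj_nonneg hP (aux_abs_nonneg z)
        rw [abs_of_nonneg hPz0] at hd
        -- |T z| ≤ c • P|z| ≤ n • P|z| for n := ⌈c⌉₊
        set n : ℕ := ⌈c⌉₊ with hn
        have hcn : (c : ℝ) ≤ (n : ℝ) := Nat.le_ceil c
        have hle : |T z| ≤ n • P |z| := by
          refine (hT z).trans ?_
          rw [← Nat.cast_smul_eq_nsmul ℝ n (P |z|)]
          have hnn : (0:ℝ) ≤ (n : ℝ) - c := by linarith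
          have hsm := smul_nonneg hnn hPz0
          rw [sub_smul, sub_nonneg] at hsm
          exact hsm
        have hdn : |u| ⊓ (n • P |z|) = 0 :=
          disj_nsmul (aux_abs_nonneg u) hPz0 hd n
        exact disj_of_le (aux_abs_nonneg u) (nsmul_nonneg hPz0 n) hle hdn
      -- P fixes the band: P (T z) = T z
      have hPTz : memBandGen E {x} (P (T z)) := hP.1 (T z)
      have he : memBandGen E {x} (T z - P (T z)) := by
        intro u hu
        exact disj_sub (hTz u hu) (hPTz u hu)
      have hself : |T z - P (T z)| ⊓ |T z - P (T z)| = 0 :=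
        hP.2 (T z) (T z - P (T z)) he
      rw [inf_idem] at hself
      exact sub_eq_zero.mp (aux_abs_eq_zero hself)
  · rintro ⟨S, ⟨c, hc, hS⟩, rfl⟩
    refine ⟨c, hc, fun z => ?_⟩
    simp only [LinearMap.coe_comp, Function.comp_apply]
    calc |P (S z)| ≤ P |S z| := bandProj_abs_le hP (S z)
    _ ≤ P (c • |z|) := bandProj_mono hP (hS z)
    _ = c • P |z| := by rw [map_smul]
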